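/- For λ ∈ (0,1) and s ∈ ℂ with 0 < Re(s) < 1/λ, the degenerate gamma function satisfies Γ_λ(s) = λ^{-s} · Γ(s)Γ(1/λ − s)/Γ(1/λ). -/

import Mathlib

open MeasureTheory Complex Set

/-- The degenerate gamma function, defined as an integral. -/
noncomputable def degGamma (l : ℝ) (s : ℂ) : ℂ :=
  ∫ t in Set.Ioi (0 : ℝ), ((1 + l * t : ℝ) : ℂ) ^ (-(1 / l) : ℂ) * (t : ℂ) ^ (s - 1)

private lemma ofReal_inv_cpow {a : ℝ} (ha : 0 < a) (w : ℂ) :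
    ((a⁻¹ : ℝ) : ℂ) ^ w = ((a : ℝ) : ℂ) ^ (-w) := by
  rw [Complex.ofReal_inv, Complex.inv_cpow _ _ ?_, ← Complex.cpow_neg]
  rw [Complex.arg_ofReal_of_nonneg ha.le]
  exact Real.pi_ne_zero.symm

theorem degGamma_eq_gamma_formula (l : ℝ) (hl : l ∈ Set.Ioo (0 : ℝ) 1)
    (s : ℂ) (hs : 0 < s.re) (hs' : s.re < 1 / l) :
    degGamma l s =
      (l : ℂ) ^ (-s) * Complex.Gamma s * Complex.Gamma (1 / l - s) / Complex.Gamma (1 / l) := by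
  obtain ⟨hl0, hl1⟩ := hl
  set c : ℂ := 1 / (l : ℂ) with hc
  have hcr : c = ((1 / l : ℝ) : ℂ) := by push_cast; ring
  have hcre : c.re = 1 / l := by rw [hcr, Complex.ofReal_re]
  set t : ℂ := c - s with htdef
  have ht : 0 < t.re := by
    simp only [htdef, Complex.sub_re, hcre]
    linarith
  have hlc : (l : ℂ) ≠ 0 := Complex.ofReal_ne_zero.mpr hl0.ne'
  -- the auxiliary integral over (0, ∞)
  set g : ℝ → ℂ := fun u => ((1 + u : ℝ) : ℂ) ^ (-c) * (u : ℂ) ^ (s - 1) with hg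
  -- Step 1: betaIntegral s t equals ∫ g over Ioi 0
  have himg : (fun u : ℝ => u / (1 + u)) '' Ioi 0 = Ioo 0 1 := by
    ext y
    constructor
    · rintro ⟨u, hu, rfl⟩
      have hu0 : (0 : ℝ) < u := hu
      have h1u : (0 : ℝ) < 1 + u := by linarith
      exact ⟨div_pos hu0 h1u, by rw [div_lt_one h1u]; linarith⟩
    · rintro ⟨hy0, hy1⟩
      have h1y : (1 : ℝ) - y ≠ 0 := by linarith
      refine ⟨y / (1 - y), div_pos hy0 (by linarith), ?_⟩
      field_simp
      ring
  have hderiv : ∀ u ∈ Ioi (0 : ℝ),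
      HasDerivWithinAt (fun u : ℝ => u / (1 + u)) (((1 + u) ^ 2)⁻¹) (Ioi 0) u := by
    intro u hu
    have h1u : (1 : ℝ) + u ≠ 0 := by have : (0:ℝ) < u := hu; positivity
    have h := (hasDerivAt_id u).div ((hasDerivAt_id u).const_add 1) h1u
    refine HasDerivAt.hasDerivWithinAt ?_
    convert h using 1
    · rfl
    · rfl
    · simp only [id_eq, one_mul, mul_one]
      ring
  have hinj : InjOn (fun u : ℝ => u / (1 + u)) (Ioi 0) := by
    intro a ha b hb hab
    have h1a : (1 : ℝ) + a ≠ 0 := by have : (0:ℝ) < a := ha; positivity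
    have h1b : (1 : ℝ) + b ≠ 0 := by have : (0:ℝ) < b := hb; positivity
    field_simp at hab
    nlinarith [hab]
  have hbeta : Complex.betaIntegral s t = ∫ u in Ioi (0 : ℝ), g u := by
    rw [Complex.betaIntegral, intervalIntegral.integral_of_le zero_le_one,
      MeasureTheory.integral_Ioc_eq_integral_Ioo, ← himg,
      integral_image_eq_integral_abs_deriv_smul measurableSet_Ioi hderiv hinj]
    refine setIntegral_congr_fun measurableSet_Ioi fun u hu => ?_
    have hu0 : (0 : ℝ) < u := hu
    have h1u : (0 : ℝ) < 1 + u := by linarith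
    have h1uc : ((1 + u : ℝ) : ℂ) ≠ 0 := Complex.ofReal_ne_zero.mpr h1u.ne'
    have habs : |((1 + u) ^ 2)⁻¹| = ((1 + u) ^ 2)⁻¹ := abs_of_pos (by positivity)
    have hx1 : (1 : ℝ) - u / (1 + u) = (1 + u)⁻¹ := by field_simp; ring
    have hx2 : (u / (1 + u) : ℝ) = u * (1 + u)⁻¹ := div_eq_mul_inv _ _
    rw [show (1:ℂ) - ((u / (1 + u) : ℝ) : ℂ) = ((1 - u / (1 + u) : ℝ) : ℂ) by push_cast; ring]
    rw [habs, hx1, hx2, Complex.ofReal_mul,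
      mul_cpow_ofReal_nonneg hu0.le (by positivity),
      ofReal_inv_cpow h1u (s - 1), ofReal_inv_cpow h1u (t - 1)]
    have hsq : (((1 + u) ^ 2)⁻¹ : ℝ) = (((1 + u) ^ 2 : ℝ))⁻¹ := rfl
    have h2 : ((((1 + u) ^ 2 : ℝ))⁻¹ : ℝ) • ((u : ℂ) ^ (s - 1) *
        ((1 + u : ℝ) : ℂ) ^ (-(s - 1)) * ((1 + u : ℝ) : ℂ) ^ (-(t - 1)))
        = (((1 + u : ℝ) : ℂ) ^ (-(2 : ℂ)) * ((1 + u : ℝ) : ℂ) ^ (-(s - 1)) *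
          ((1 + u : ℝ) : ℂ) ^ (-(t - 1))) * (u : ℂ) ^ (s - 1) := by
      have hA : ((1 + u : ℝ) : ℂ) ^ (-(2 : ℂ)) = (((1 + u : ℝ) : ℂ) ^ (2 : ℕ))⁻¹ := by
        rw [show (-(2:ℂ)) = -((2:ℕ):ℂ) by norm_num, Complex.cpow_neg, Complex.cpow_natCast]
      rw [Complex.real_smul, hA]
      push_cast
      ring
    rw [hsq, h2, ← Complex.cpow_add _ _ h1uc, ← Complex.cpow_add _ _ h1uc]
    have : -(2 : ℂ) + -(s - 1) + -(t - 1) = -c := by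
      have : s + t = c := by rw [htdef]; ring
      linear_combination -this
    rw [this, hg]
  -- Step 2: scaling, degGamma l s = l ^ (-s) * ∫ g
  have hscale : degGamma l s = (l : ℂ) ^ (-s) * ∫ u in Ioi (0 : ℝ), g u := by
    have h1 : degGamma l s = ∫ x in Ioi (0 : ℝ), (l : ℂ) ^ (-(s - 1)) * g (l * x) := by
      rw [degGamma]
      refine setIntegral_congr_fun measurableSet_Ioi fun x hx => ?_
      have hx0 : (0 : ℝ) < x := hx
      have : g (l * x) = ((1 + l * x : ℝ) : ℂ) ^ (-c) *
          ((l : ℂ) ^ (s - 1) * (x : ℂ) ^ (s - 1)) := by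
        rw [hg]
        simp only [Complex.ofReal_mul]
        rw [mul_cpow_ofReal_nonneg hl0.le hx0.le]
      rw [this, show (-(1 / (l:ℂ))) = -c from rfl]
      have h2 : (l:ℂ) ^ (-(s-1)) * (l:ℂ) ^ (s-1) = 1 := by
        rw [← Complex.cpow_add _ _ hlc]; simp
      linear_combination -(((1 + l * x : ℝ) : ℂ) ^ (-c) * (x:ℂ) ^ (s-1)) * h2
    rw [h1, MeasureTheory.integral_const_mul,
      integral_comp_mul_left_Ioi g 0 hl0, mul_zero]
    rw [Complex.real_smul, Complex.ofReal_inv,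
      show ((l : ℂ))⁻¹ = (l : ℂ) ^ (-1 : ℂ) from (Complex.cpow_neg_one _).symm,
      ← mul_assoc, ← Complex.cpow_add _ _ hlc,
      show -(s - 1) + (-1 : ℂ) = -s by ring]
  -- Step 3: Gamma identity
  have hGc : Complex.Gamma c ≠ 0 := by
    refine Complex.Gamma_ne_zero_of_re_pos ?_
    rw [hcre]
    have : (0:ℝ) < 1 / l := by positivity
    exact this
  have key : Complex.Gamma s * Complex.Gamma t = Complex.Gamma c * Complex.betaIntegral s t := by
    have := Complex.Gamma_mul_Gamma_eq_betaIntegral hs ht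
    rwa [show s + t = c by rw [htdef]; ring] at this
  rw [hscale, ← hbeta, eq_div_iff hGc]
  linear_combination -((l:ℂ) ^ (-s)) * key
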